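/- If L is a stable triplet cover of a fully-resolved X-tree T with n := |X| ≥ 3, then L is a strong lasso for T, i.e., L is simultaneously an edge-weight lasso and a topological lasso for T. -/

import Mathlib

open SimpleGraph

/-- An `X`-tree: a finite tree whose leaf set is (the image of) `X`,
with no vertices of degree 2. -/
structure XTree (α : Type) (X : Set α) where
  V : Type
  fintypeV : Fintype V
  tree : SimpleGraph V
  isTree : tree.IsTree
  ι : α → V
  ι_injOn : Set.InjOn ι X
  leaf_iff : ∀ v : V, (tree.neighborSet v).ncard = 1 ↔ v ∈ ι '' X
  no_deg_two : ∀ v : V, (tree.neighborSet v).ncard ≠ 2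

namespace XTree

variable {α : Type} {X : Set α}

/-- A vertex is interior if it is not a leaf. -/
def IsInterior (T : XTree α X) (v : T.V) : Prop := v ∉ T.ι '' X

/-- Fully-resolved: every interior vertex has degree 3. -/
def IsFullyResolved (T : XTree α X) : Prop :=
  ∀ v : T.V, T.IsInterior v → (T.tree.neighborSet v).ncard = 3

/-- The unique path between two vertices of the tree. -/
noncomputable def treePath (T : XTree α X) (u v : T.V) : T.tree.Walk u v :=
  (T.isTree.existsUnique_path u v).exists.choose

lemma treePath_isPath (T : XTree α X) (u v : T.V) : (T.treePath u v).IsPath :=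
  (T.isTree.existsUnique_path u v).exists.choose_spec

/-- Weighted path distance between two vertices. -/
noncomputable def pathDist (T : XTree α X) (w : Sym2 T.V → ℝ) (u v : T.V) : ℝ :=
  ((T.treePath u v).edges.map w).sum

lemma treePath_symm (T : XTree α X) (u v : T.V) :
    T.treePath u v = (T.treePath v u).reverse :=
  (T.isTree.existsUnique_path u v).unique (T.treePath_isPath u v)
    ((T.treePath_isPath v u).reverse)

lemma pathDist_symm (T : XTree α X) (w : Sym2 T.V → ℝ) (u v : T.V) :
    T.pathDist w u v = T.pathDist w v u := by
  unfold pathDist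
  rw [treePath_symm, SimpleGraph.Walk.edges_reverse, List.map_reverse, List.sum_reverse]

/-- The induced distance on pairs of leaf labels. -/
noncomputable def cordDist (T : XTree α X) (w : Sym2 T.V → ℝ) : Sym2 α → ℝ :=
  Sym2.lift ⟨fun a b => T.pathDist w (T.ι a) (T.ι b),
    fun a b => T.pathDist_symm w (T.ι a) (T.ι b)⟩

/-- An edge-weighting assigns a nonnegative weight to every edge. -/
def IsEdgeWeighting (T : XTree α X) (w : Sym2 T.V → ℝ) : Prop :=
  ∀ e ∈ T.tree.edgeSet, 0 ≤ w e

/-- A proper edge-weighting gives positive weight to every interior edge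
(i.e. every edge not incident with a leaf). -/
def IsProperWeighting (T : XTree α X) (w : Sym2 T.V → ℝ) : Prop :=
  T.IsEdgeWeighting w ∧ ∀ e ∈ T.tree.edgeSet, (∀ v ∈ e, T.IsInterior v) → 0 < w e

/-- The set of cords (2-element subsets) of `X`. -/
def cords (X : Set α) : Set (Sym2 α) := {c | ¬ c.IsDiag ∧ ∀ a ∈ c, a ∈ X}

/-- Two weighted trees are `L`-isometric if their leaf distances agree on `L`. -/
def LIsometric (T : XTree α X) (w : Sym2 T.V → ℝ) (T' : XTree α X) (w' : Sym2 T'.V → ℝ)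
    (L : Set (Sym2 α)) : Prop :=
  ∀ c ∈ L, T.cordDist w c = T'.cordDist w' c

/-- `L` is an edge-weight lasso for `T`. -/
def IsEdgeWeightLasso (T : XTree α X) (L : Set (Sym2 α)) : Prop :=
  ∀ w w' : Sym2 T.V → ℝ, T.IsProperWeighting w → T.IsProperWeighting w' →
    LIsometric T w T w' L → ∀ e ∈ T.tree.edgeSet, w e = w' e

/-- Two `X`-trees are equivalent if there is a graph isomorphism fixing `X`. -/
def Equivalent (T T' : XTree α X) : Prop :=
  ∃ φ : T.tree ≃g T'.tree, ∀ a ∈ X, φ (T.ι a) = T'.ι a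

/-- `L` is a topological lasso for `T`. -/
def IsTopologicalLasso (T : XTree α X) (L : Set (Sym2 α)) : Prop :=
  ∀ (T' : XTree α X) (w : Sym2 T.V → ℝ) (w' : Sym2 T'.V → ℝ),
    T.IsProperWeighting w → T'.IsProperWeighting w' →
    LIsometric T w T' w' L → Equivalent T T'

/-- `L` is a strong lasso for `T`. -/
def IsStrongLasso (T : XTree α X) (L : Set (Sym2 α)) : Prop :=
  IsEdgeWeightLasso T L ∧ IsTopologicalLasso T L

/-- The set of leaf labels on the side of edge `e` containing endpoint `u`. -/
def sideSet (T : XTree α X) (e : Sym2 T.V) (u : T.V) : Set α :=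
  {a | a ∈ X ∧ (T.tree.deleteEdges {e}).Reachable (T.ι a) u}

/-- The clusters of `T`: leaf sets of the two components of `T - e`, over all edges `e`. -/
def clus (T : XTree α X) : Set (Set α) :=
  {A | ∃ e ∈ T.tree.edgeSet, ∃ u ∈ e, A = T.sideSet e u}

/-- A stable transversal for a collection of subsets of `α`. -/
def IsStableTransversal (C : Set (Set α)) (f : Set α → α) : Prop :=
  (∀ A ∈ C, f A ∈ A) ∧ ∀ A ∈ C, ∀ B ∈ C, f A ∈ B → B ⊆ A → f A = f B

/-- Leaf labels of the component of `T - v` containing the vertex `u`. -/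
def compSet (T : XTree α X) (v u : T.V) : Set α :=
  {a | a ∈ X ∧ ∃ p : T.tree.Walk (T.ι a) u, v ∉ p.support}

/-- The triplet cover `L_{(T,f)}` generated by a transversal `f`. -/
def tripletCoverOf (T : XTree α X) (f : Set α → α) : Set (Sym2 α) :=
  {c | ∃ v u₁ u₂ : T.V, T.IsInterior v ∧ T.tree.Adj v u₁ ∧ T.tree.Adj v u₂ ∧ u₁ ≠ u₂ ∧
    c = s(f (T.compSet v u₁), f (T.compSet v u₂))}

/-- `L` is a stable triplet cover of `T`. -/
def IsStableTripletCover (T : XTree α X) (L : Set (Sym2 α)) : Prop :=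
  ∃ f : Set α → α, IsStableTransversal (clus T) f ∧ L = tripletCoverOf T f

/-- `T|{a,b,c,d}` is the quartet tree `ab||cd`: the four leaves are distinct members
of `X` and the path from `a` to `b` is vertex-disjoint from the path from `c` to `d`. -/
def Quartet (T : XTree α X) (a b c d : α) : Prop :=
  a ∈ X ∧ b ∈ X ∧ c ∈ X ∧ d ∈ X ∧ List.Pairwise (· ≠ ·) [a, b, c, d] ∧
  ∀ (p : T.tree.Walk (T.ι a) (T.ι b)) (q : T.tree.Walk (T.ι c) (T.ι d)),
    p.IsPath → q.IsPath → ∀ v, v ∈ p.support → v ∉ q.support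

/-- The cord `c` admits pivots relative to already-available cords `L ∪ earlier`. -/
def HasPivots (T : XTree α X) (L : Set (Sym2 α)) (earlier : List (Sym2 α))
    (c : Sym2 α) : Prop :=
  ∃ a b p q : α, c = s(a, b) ∧ Quartet T a p q b ∧
    ∀ c' ∈ [s(a, p), s(a, q), s(b, p), s(b, q), s(p, q)], c' ∈ L ∨ c' ∈ earlier

/-- `ord` is a shellable ordering of `cords X - L` with respect to `T`. -/
def IsShellableOrdering (T : XTree α X) (L : Set (Sym2 α)) (ord : List (Sym2 α)) : Prop :=
  ord.Nodup ∧ (∀ c, c ∈ ord ↔ c ∈ cords X \ L) ∧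
  ∀ i (h : i < ord.length), HasPivots T L (ord.take i) (ord.get ⟨i, h⟩)

/-- `L` is a shellable lasso for `T`: `L ⊆ cords X`, every element of `X` occurs in some
cord of `L`, and `cords X - L` admits a shellable ordering. -/
def IsShellableLasso (T : XTree α X) (L : Set (Sym2 α)) : Prop :=
  L ⊆ cords X ∧ (∀ a ∈ X, ∃ c ∈ L, a ∈ c) ∧ ∃ ord, IsShellableOrdering T L ord

/-- The graph `(Xs, L)` is a 2d-tree. -/
def Is2dTree (Xs : Set α) (L : Set (Sym2 α)) : Prop :=
  ∃ ord : List α, ord.Nodup ∧ (∀ a, a ∈ ord ↔ a ∈ Xs) ∧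
    ∃ h2 : 2 ≤ ord.length,
      s(ord.get ⟨0, by omega⟩, ord.get ⟨1, by omega⟩) ∈ L ∧
      ∀ i (h : i < ord.length), 2 ≤ i →
        {b | b ∈ ord.take i ∧ s(ord.get ⟨i, h⟩, b) ∈ L}.ncard = 2

/-- Leaves `x` and `y` form a cherry of `T`. -/
def IsCherry (T : XTree α X) (x y : α) : Prop :=
  x ≠ y ∧ x ∈ X ∧ y ∈ X ∧ ∃ v : T.V, T.tree.Adj (T.ι x) v ∧ T.tree.Adj (T.ι y) v

/-- `T'` is (equivalent to) the restriction `T|Y` of `T` to `Y ⊆ X`, characterized by the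
fact that the clusters of `T|Y` are exactly the nonempty proper restrictions to `Y`
of clusters of `T`. -/
def IsRestrictionOf {Y : Set α} (T' : XTree α Y) (T : XTree α X) : Prop :=
  Y ⊆ X ∧ clus T' = {A | (∃ B ∈ clus T, A = B ∩ Y) ∧ A.Nonempty ∧ A ≠ Y}

open Classical in
/-- One application of the extension rule (R), acting on a state consisting of
the current set of cords together with the current distance values. -/
def RStep (Xs : Set α) (S S' : Set (Sym2 α) × (Sym2 α → ℝ)) : Prop :=
  ∃ x y u z : α, x ∈ Xs ∧ y ∈ Xs ∧ u ∈ Xs ∧ z ∈ Xs ∧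
    List.Pairwise (· ≠ ·) [x, y, u, z] ∧
    s(x, y) ∈ S.1 ∧ s(y, u) ∈ S.1 ∧ s(y, z) ∈ S.1 ∧ s(x, u) ∈ S.1 ∧ s(u, z) ∈ S.1 ∧
    s(x, z) ∉ S.1 ∧
    S.2 s(x, y) + S.2 s(u, z) < S.2 s(x, u) + S.2 s(y, z) ∧
    S'.1 = insert s(x, z) S.1 ∧
    S'.2 = Function.update S.2 s(x, z) (S.2 s(x, u) + S.2 s(y, z) - S.2 s(y, u))

/-- `S` is the result `cl_R(L)` (with its `d`-values) of exhaustively applying rule (R)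
starting from `L` with initial distance values `d`. -/
def IsRClosureOf (Xs : Set α) (L : Set (Sym2 α)) (d : Sym2 α → ℝ)
    (S : Set (Sym2 α) × (Sym2 α → ℝ)) : Prop :=
  Relation.ReflTransGen (RStep Xs) (L, d) S ∧ ∀ S', ¬ RStep Xs S S'

end XTree

section Lemmas
namespace XTree
open Classical
variable {α : Type} {X : Set α} (T : XTree α X)

open SimpleGraph Walk

lemma path_unique {u v : T.V} {p : T.tree.Walk u v} (hp : p.IsPath) :
    p = T.treePath u v :=
  (T.isTree.existsUnique_path u v).unique hp (T.treePath_isPath u v)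

lemma treePath_nil (u : T.V) : T.treePath u u = Walk.nil :=
  (T.path_unique (by simp)).symm

lemma mem_support_of_walk {x y v : T.V} (hv : v ∈ (T.treePath x y).support)
    (W : T.tree.Walk x y) : v ∈ W.support := by
  classical
  have hb : W.bypass = T.treePath x y := T.path_unique (W.bypass_isPath)
  exact W.support_bypass_subset (hb ▸ hv)

lemma pathDist_eq {w : Sym2 T.V → ℝ} {u v : T.V} {p : T.tree.Walk u v} (hp : p.IsPath) :
    T.pathDist w u v = (p.edges.map w).sum := by
  unfold pathDist
  rw [T.path_unique hp]

lemma pathDist_self (w : Sym2 T.V → ℝ) (u : T.V) : T.pathDist w u u = 0 := by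
  unfold pathDist
  rw [T.treePath_nil u]
  simp

/-- Betweenness in the tree `T`. -/
def Btw (u v x : T.V) : Prop := v ∈ (T.treePath u x).support

lemma btw_left (u v : T.V) : T.Btw u u v := Walk.start_mem_support _
lemma btw_right (u v : T.V) : T.Btw u v v := Walk.end_mem_support _

lemma takeUntil_eq {u v x : T.V} (h : T.Btw u v x) :
    (T.treePath u x).takeUntil v h = T.treePath u v :=
  T.path_unique ((T.treePath_isPath u x).takeUntil h)

lemma dropUntil_eq {u v x : T.V} (h : T.Btw u v x) :
    (T.treePath u x).dropUntil v h = T.treePath v x :=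
  T.path_unique ((T.treePath_isPath u x).dropUntil h)

lemma btw_split {u v x : T.V} (h : T.Btw u v x) :
    (T.treePath u v).append (T.treePath v x) = T.treePath u x := by
  conv_rhs => rw [← Walk.take_spec (T.treePath u x) h]
  rw [T.takeUntil_eq h, T.dropUntil_eq h]

lemma pathDist_add {w : Sym2 T.V → ℝ} {u v x : T.V} (h : T.Btw u v x) :
    T.pathDist w u x = T.pathDist w u v + T.pathDist w v x := by
  unfold pathDist
  rw [← T.btw_split h, Walk.edges_append, List.map_append, List.sum_append]

lemma support_sub_left {u v x : T.V} (h : T.Btw u v x) :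
    ∀ y ∈ (T.treePath u v).support, y ∈ (T.treePath u x).support := by
  intro y hy
  rw [← T.takeUntil_eq h] at hy
  exact Walk.support_takeUntil_subset _ h hy

lemma support_sub_right {u v x : T.V} (h : T.Btw u v x) :
    ∀ y ∈ (T.treePath v x).support, y ∈ (T.treePath u x).support := by
  intro y hy
  rw [← T.dropUntil_eq h] at hy
  exact Walk.support_dropUntil_subset _ h hy

lemma btw_symm {u v x : T.V} (h : T.Btw u v x) : T.Btw x v u := by
  unfold Btw
  rw [T.treePath_symm x u, Walk.support_reverse, List.mem_reverse]
  exact h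

/-- The supports of the two halves of a path meet only in the middle vertex. -/
lemma split_inter {u v x : T.V} (h : T.Btw u v x) :
    ∀ y, y ∈ (T.treePath u v).support → y ∈ (T.treePath v x).support → y = v := by
  intro y hy₁ hy₂
  by_contra hne
  have hsp := T.btw_split h
  have hnd : ((T.treePath u v).append (T.treePath v x)).IsPath := by
    rw [hsp]; exact T.treePath_isPath u x
  rw [Walk.isPath_def, Walk.support_append, List.nodup_append] at hnd
  have hy₂' : y ∈ (T.treePath v x).support.tail := by
    have : (T.treePath v x).support = v :: (T.treePath v x).support.tail := by
      have := Walk.support_eq_cons (T.treePath v x)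
      simpa using this
    rw [this] at hy₂
    rcases List.mem_cons.mp hy₂ with h1 | h1
    · exact absurd h1 hne
    · exact h1
  exact hnd.2.2 y hy₁ y hy₂' rfl

/-- Concatenating two paths meeting only at the joint gives a path. -/
lemma append_isPath {u v x : T.V} {p : T.tree.Walk u v} {q : T.tree.Walk v x}
    (hp : p.IsPath) (hq : q.IsPath)
    (hint : ∀ y, y ∈ p.support → y ∈ q.support → y = v) :
    (p.append q).IsPath := by
  rw [Walk.isPath_def, Walk.support_append, List.nodup_append]
  refine ⟨hp.support_nodup, (hq.support_nodup).tail, ?_⟩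
  intro y hy₁ y' hy₂ hyy
  subst hyy
  have hy₂' : y ∈ q.support := List.mem_of_mem_tail hy₂
  have : y = v := hint y hy₁ hy₂'
  subst this
  have : q.support = y :: q.support.tail := by
    have := Walk.support_eq_cons q; simpa using this
  have hnd := hq.support_nodup
  rw [this] at hnd
  exact (List.nodup_cons.mp hnd).1 hy₂

lemma sep_nbrs {v u₁ u₂ : T.V} (h₁ : T.tree.Adj v u₁) (h₂ : T.tree.Adj v u₂)
    (hne : u₁ ≠ u₂) (W : T.tree.Walk u₁ u₂) (hv : v ∉ W.support) : False := by
  classical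
  have hP : (Walk.cons h₁.symm (Walk.cons h₂ Walk.nil) : T.tree.Walk u₁ u₂).IsPath := by
    rw [Walk.isPath_def]
    simp [h₁.ne', h₂.ne, hne]
  have hmem : v ∈ (T.treePath u₁ u₂).support := by
    rw [← T.path_unique hP]
    simp
  exact hv (T.mem_support_of_walk hmem W)

lemma exists_first_meet {a b c : T.V} (r : T.tree.Walk c b) (p : T.tree.Walk a b) :
    ∃ m, ∃ pa : T.tree.Walk a m, m ∈ r.support ∧ (∀ y ∈ pa.support, y ∈ p.support) ∧
      ∀ y ∈ pa.support, y ∈ r.support → y = m := by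
  classical
  induction p with
  | nil =>
    exact ⟨_, Walk.nil, Walk.end_mem_support r, by simp, by simp⟩
  | @cons u u' b h q ih =>
    by_cases ha : u ∈ r.support
    · exact ⟨u, Walk.nil, ha, by simp, by simp⟩
    · obtain ⟨m, pa, hm, hsub, hmeet⟩ := ih r
      refine ⟨m, Walk.cons h pa, hm, ?_, ?_⟩
      · intro y hy
        rcases List.mem_cons.mp (by simpa using hy) with h1 | h1
        · simp [h1]
        · simp [hsub y h1]
      · intro y hy hyr
        rcases List.mem_cons.mp (by simpa using hy) with h1 | h1
        · exact absurd (h1 ▸ hyr) ha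
        · exact hmeet y h1 hyr

lemma exists_median (a b c : T.V) : ∃ m, T.Btw a m b ∧ T.Btw a m c ∧ T.Btw b m c := by
  classical
  obtain ⟨m, pa, hm, hsub, hmeet⟩ := T.exists_first_meet (T.treePath c b) (T.treePath a b)
  have hmb : T.Btw a m b := hsub m (Walk.end_mem_support pa)
  have hcb : T.Btw c m b := hm
  have hbmc : T.Btw b m c := T.btw_symm hcb
  refine ⟨m, hmb, ?_, hbmc⟩
  -- build a path from a to c through m
  set q₁ := pa.bypass with hq₁
  have hq₁sub : ∀ y ∈ q₁.support, y ∈ pa.support := fun y hy => pa.support_bypass_subset hy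
  set q₂ := ((T.treePath c b).takeUntil m hm).reverse with hq₂
  have hq₂path : q₂.IsPath := ((T.treePath_isPath c b).takeUntil hm).reverse
  have hq₂sub : ∀ y ∈ q₂.support, y ∈ (T.treePath c b).support := by
    intro y hy
    rw [hq₂, Walk.support_reverse, List.mem_reverse] at hy
    exact Walk.support_takeUntil_subset _ hm hy
  have happ : (q₁.append q₂).IsPath := by
    refine T.append_isPath pa.bypass_isPath hq₂path ?_
    intro y hy₁ hy₂
    exact hmeet y (hq₁sub y hy₁) (hq₂sub y hy₂)
  have : q₁.append q₂ = T.treePath a c := T.path_unique happ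
  show m ∈ (T.treePath a c).support
  rw [← this, Walk.mem_support_append_iff]
  exact Or.inl (Walk.end_mem_support q₁)

lemma length_btw {a b c : T.V} (h : T.Btw a b c) :
    (T.treePath a c).length = (T.treePath a b).length + (T.treePath b c).length := by
  rw [← T.btw_split h, Walk.length_append]

lemma btw_antisymm {a b c : T.V} (h₁ : T.Btw a b c) (h₂ : T.Btw a c b) : b = c := by
  have e₁ := T.length_btw h₁
  have e₂ := T.length_btw h₂
  have hrev : (T.treePath c b).length = (T.treePath b c).length := by
    rw [T.treePath_symm c b, Walk.length_reverse]
  have h0 : (T.treePath b c).length = 0 := by omega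
  have := T.treePath b c
  cases hbc : T.treePath b c with
  | nil => rfl
  | cons h q => rw [hbc] at h0; simp at h0

lemma btw_trichotomy {a d b c : T.V} (hb : T.Btw a b d) (hc : T.Btw a c d) :
    T.Btw a b c ∨ T.Btw a c b := by
  classical
  have hsplit := Walk.take_spec (T.treePath a d) hc
  have hb' : b ∈ (((T.treePath a d).takeUntil c hc).append
      ((T.treePath a d).dropUntil c hc)).support := by rw [hsplit]; exact hb
  rw [Walk.mem_support_append_iff] at hb'
  rcases hb' with h1 | h1
  · left
    rw [T.takeUntil_eq hc] at h1
    exact h1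
  · right
    rw [T.dropUntil_eq hc] at h1
    -- h1 : T.Btw c b d ; build path a → c → b
    have hcb : (T.treePath c d).takeUntil b h1 = T.treePath c b := T.takeUntil_eq h1
    have happ : ((T.treePath a c).append (T.treePath c b)).IsPath := by
      refine T.append_isPath (T.treePath_isPath a c) (T.treePath_isPath c b) ?_
      intro y hy₁ hy₂
      have : y ∈ (T.treePath c d).support := by
        rw [← hcb] at hy₂
        exact Walk.support_takeUntil_subset _ h1 hy₂
      exact T.split_inter hc y hy₁ this
    have : (T.treePath a c).append (T.treePath c b) = T.treePath a b := T.path_unique happ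
    show c ∈ (T.treePath a b).support
    rw [← this, Walk.mem_support_append_iff]
    exact Or.inl (Walk.end_mem_support _)

lemma btw_trans {a b c d : T.V} (h₁ : T.Btw a b c) (h₂ : T.Btw b c d) (hbc : b ≠ c) :
    T.Btw a c d := by
  by_contra hnot
  have hW : c ∈ ((T.treePath a b).reverse.append (T.treePath a d)).support :=
    T.mem_support_of_walk h₂ _
  rw [Walk.mem_support_append_iff] at hW
  rcases hW with h1 | h1
  · rw [Walk.support_reverse, List.mem_reverse] at h1
    exact hbc (T.btw_antisymm h₁ h1)
  · exact hnot h1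

lemma btw_trans2 {a b c d : T.V} (h₁ : T.Btw a b c) (h₂ : T.Btw a c d) : T.Btw a b d :=
  T.support_sub_left h₂ b h₁

lemma mem_compSet {v u : T.V} {a : α} :
    a ∈ T.compSet v u ↔ a ∈ X ∧ ∃ p : T.tree.Walk (T.ι a) u, v ∉ p.support := Iff.rfl

lemma not_reachable_of_bridge {v u : T.V} (h : T.tree.Adj v u) :
    ¬ (T.tree.deleteEdges {s(v,u)}).Reachable v u := by
  have hbr := (isAcyclic_iff_forall_edge_isBridge.mp T.isTree.IsAcyclic)
    ((T.tree.mem_edgeSet).mpr h)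
  exact isBridge_iff.mp hbr

lemma compSet_eq_sideSet {v u : T.V} (h : T.tree.Adj v u) :
    T.compSet v u = T.sideSet s(v,u) u := by
  ext a
  constructor
  · rintro ⟨haX, p, hp⟩
    refine ⟨haX, ⟨p.toDeleteEdges {s(v,u)} ?_⟩⟩
    intro e he hmem
    rw [Set.mem_singleton_iff] at hmem
    subst hmem
    exact hp (p.fst_mem_support_of_mem_edges he)
  · rintro ⟨haX, ⟨p⟩⟩
    refine ⟨haX, p.transfer T.tree
      (fun e he => edgeSet_subset_edgeSet.mpr (deleteEdges_le _) (p.edges_subset_edgeSet he)),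
      ?_⟩
    rw [Walk.support_transfer]
    intro hv
    exact T.not_reachable_of_bridge h ⟨p.dropUntil v hv⟩

lemma compSet_mem_clus {v u : T.V} (h : T.tree.Adj v u) : T.compSet v u ∈ clus T :=
  ⟨s(v,u), (T.tree.mem_edgeSet).mpr h, u, by simp, T.compSet_eq_sideSet h⟩

lemma compSet_disjoint {v u₁ u₂ : T.V} (h₁ : T.tree.Adj v u₁) (h₂ : T.tree.Adj v u₂)
    (hne : u₁ ≠ u₂) {a : α} (ha₁ : a ∈ T.compSet v u₁) (ha₂ : a ∈ T.compSet v u₂) : False := by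
  obtain ⟨_, W₁, hW₁⟩ := ha₁
  obtain ⟨_, W₂, hW₂⟩ := ha₂
  refine T.sep_nbrs h₁ h₂ hne (W₁.reverse.append W₂) ?_
  rw [Walk.mem_support_append_iff, Walk.support_reverse, List.mem_reverse]
  rintro (hv | hv)
  · exact hW₁ hv
  · exact hW₂ hv

lemma treePath_avoid {v u : T.V} {a : α} (ha : a ∈ T.compSet v u) :
    v ∉ (T.treePath (T.ι a) u).support := by
  classical
  obtain ⟨_, W, hW⟩ := ha
  rw [← T.path_unique W.bypass_isPath]
  exact fun hv => hW (W.support_bypass_subset hv)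

lemma btw_comp {v u : T.V} (h : T.tree.Adj v u) {a : α} (ha : a ∈ T.compSet v u) :
    T.Btw (T.ι a) u v := by
  have hav := T.treePath_avoid ha
  have happ : ((T.treePath (T.ι a) u).append (Walk.cons h.symm Walk.nil)).IsPath := by
    refine T.append_isPath (T.treePath_isPath _ _) ?_ ?_
    · rw [Walk.isPath_def]; simp [h.ne']
    · intro y hy₁ hy₂
      simp only [Walk.support_cons, Walk.support_nil, List.mem_cons,
        List.mem_singleton] at hy₂
      rcases hy₂ with rfl | h2
      · rfl
      · rcases h2 with rfl | h3
        · exact absurd hy₁ hav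
        · cases h3
  have heq : (T.treePath (T.ι a) u).append (Walk.cons h.symm Walk.nil)
      = T.treePath (T.ι a) v := T.path_unique happ
  show u ∈ (T.treePath (T.ι a) v).support
  rw [← heq, Walk.mem_support_append_iff]
  exact Or.inl (Walk.end_mem_support _)

lemma btw_v_of_comps {v u₁ u₂ : T.V} (h₁ : T.tree.Adj v u₁) (h₂ : T.tree.Adj v u₂)
    (hne : u₁ ≠ u₂) {a b : α} (ha : a ∈ T.compSet v u₁) (hb : b ∈ T.compSet v u₂) :
    T.Btw (T.ι a) v (T.ι b) := by
  by_contra hnot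
  obtain ⟨_, W₁, hW₁⟩ := ha
  obtain ⟨_, W₂, hW₂⟩ := hb
  refine T.sep_nbrs h₁ h₂ hne ((W₁.reverse.append (T.treePath (T.ι a) (T.ι b))).append W₂) ?_
  rw [Walk.mem_support_append_iff, Walk.mem_support_append_iff]
  rw [Walk.support_reverse, List.mem_reverse]
  rintro ((hv | hv) | hv)
  · exact hW₁ hv
  · exact hnot hv
  · exact hW₂ hv

lemma pathDist_nonneg {w : Sym2 T.V → ℝ} (hw : T.IsEdgeWeighting w) (u v : T.V) :
    0 ≤ T.pathDist w u v := by
  unfold pathDist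
  refine List.sum_nonneg ?_
  intro x hx
  rw [List.mem_map] at hx
  obtain ⟨e, he, rfl⟩ := hx
  exact hw e ((T.treePath u v).edges_subset_edgeSet he)

lemma cordDist_mk (w : Sym2 T.V → ℝ) (a b : α) :
    T.cordDist w s(a,b) = T.pathDist w (T.ι a) (T.ι b) := rfl

lemma gromov {w : Sym2 T.V → ℝ} {v : T.V} {a b c : α}
    (hab : T.Btw (T.ι a) v (T.ι b)) (hac : T.Btw (T.ι a) v (T.ι c))
    (hbc : T.Btw (T.ι b) v (T.ι c)) :
    T.pathDist w (T.ι a) v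
      = (T.cordDist w s(a,b) + T.cordDist w s(a,c) - T.cordDist w s(b,c))/2 := by
  rw [T.cordDist_mk, T.cordDist_mk, T.cordDist_mk,
    T.pathDist_add hab, T.pathDist_add hac, T.pathDist_add hbc,
    T.pathDist_symm w v (T.ι b)]
  ring

lemma leaf_ncard {a : α} (ha : a ∈ X) : (T.tree.neighborSet (T.ι a)).ncard = 1 :=
  (T.leaf_iff _).mpr ⟨a, ha, rfl⟩

lemma nbr_unique {a : α} (ha : a ∈ X) {y : T.V} (hy : T.tree.Adj (T.ι a) y) :
    T.tree.neighborSet (T.ι a) = {y} := by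
  obtain ⟨b, hb⟩ := Set.ncard_eq_one.mp (T.leaf_ncard ha)
  have : y = b := by
    have : y ∈ T.tree.neighborSet (T.ι a) := hy
    rw [hb] at this
    exact this
  rw [hb, this]

lemma interior_ne_leaf {v : T.V} (hv : T.IsInterior v) {a : α} (ha : a ∈ X) :
    v ≠ T.ι a := fun h => hv ⟨a, ha, h.symm⟩

lemma first_nbr {x z : T.V} (p : T.tree.Walk x z) (hp : p.IsPath) (hne : x ≠ z) :
    ∃ (n : T.V) (h : T.tree.Adj x n) (q : T.tree.Walk n z),
      p = Walk.cons h q ∧ x ∉ q.support := by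
  cases p with
  | nil => exact absurd rfl hne
  | cons h q =>
    rw [Walk.cons_isPath_iff] at hp
    exact ⟨_, h, q, rfl, hp.2⟩

lemma compSet_of_leaf {a : α} (ha : a ∈ X) {y : T.V} (hy : T.tree.Adj (T.ι a) y) :
    T.compSet y (T.ι a) = {a} := by
  classical
  ext b
  constructor
  · rintro ⟨hbX, W, hW⟩
    by_cases hba : T.ι b = T.ι a
    · exact Set.mem_singleton_iff.mpr (T.ι_injOn hbX ha hba)
    · exfalso
      have hp : W.bypass.IsPath := W.bypass_isPath
      have hpav : y ∉ W.bypass.support := fun h => hW (W.support_bypass_subset h)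
      obtain ⟨n, hn, q, heq, hxq⟩ := T.first_nbr W.bypass.reverse hp.reverse
        (fun h => hba h.symm)
      have : n = y := by
        have hnm : n ∈ T.tree.neighborSet (T.ι a) := hn
        rw [T.nbr_unique ha hy] at hnm
        exact hnm
      subst this
      apply hpav
      rw [← List.mem_reverse, ← Walk.support_reverse, heq, Walk.support_cons]
      exact List.mem_cons_of_mem _ (Walk.start_mem_support q)
  · rintro rfl
    exact ⟨ha, Walk.nil, by simp [hy.ne']⟩

lemma no_adjacent_leaves (hfin : X.Finite) (hcard : 3 ≤ X.ncard) {a b : α}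
    (ha : a ∈ X) (hb : b ∈ X) (hadj : T.tree.Adj (T.ι a) (T.ι b)) : False := by
  classical
  have hex : ∃ c ∈ X, c ≠ a ∧ c ≠ b := by
    by_contra hno
    push_neg at hno
    have hsub : X ⊆ {a, b} := by
      intro c hc
      by_cases hca : c = a
      · exact Or.inl hca
      · exact Or.inr (hno c hc hca)
    have := Set.ncard_le_ncard hsub ((Set.finite_singleton b).insert a)
    have h2 : ({a, b} : Set α).ncard ≤ 2 :=
      le_trans (Set.ncard_insert_le _ _) (by simp)
    omega
  obtain ⟨c, hc, hca, hcb⟩ := hex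
  have hca' : T.ι c ≠ T.ι a := fun h => hca (T.ι_injOn hc ha h)
  have hcb' : T.ι c ≠ T.ι b := fun h => hcb (T.ι_injOn hc hb h)
  have hp := (T.treePath_isPath (T.ι c) (T.ι a)).reverse
  obtain ⟨n₁, hn₁, q, heq, hq⟩ := T.first_nbr _ hp hca'.symm
  have hn₁b : n₁ = T.ι b := by
    have h' : n₁ ∈ T.tree.neighborSet (T.ι a) := hn₁
    rw [T.nbr_unique ha hadj] at h'
    exact h'
  subst hn₁b
  have hq' : q.IsPath := by
    rw [heq] at hp
    exact hp.of_cons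
  obtain ⟨n₂, hn₂, q₂, heq₂, hq₂⟩ := T.first_nbr q hq' hcb'.symm
  have hn₂a : n₂ = T.ι a := by
    have h' : n₂ ∈ T.tree.neighborSet (T.ι b) := hn₂
    rw [T.nbr_unique hb hadj.symm] at h'
    exact h'
  subst hn₂a
  apply hq
  rw [heq₂, Walk.support_cons]
  exact List.mem_cons_of_mem _ (Walk.start_mem_support q₂)

lemma f_singleton {f : Set α → α} (hf : IsStableTransversal (clus T) f) {a : α}
    (h : ({a} : Set α) ∈ clus T) : f {a} = a := hf.1 _ h

lemma leaf_rep {f : Set α → α} (hf : IsStableTransversal (clus T) f) {a : α} (ha : a ∈ X)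
    {y : T.V} (hy : T.tree.Adj (T.ι a) y) : f (T.compSet y (T.ι a)) = a := by
  rw [T.compSet_of_leaf ha hy]
  refine T.f_singleton hf ?_
  rw [← T.compSet_of_leaf ha hy]
  exact T.compSet_mem_clus hy.symm

lemma stab_edge {f : Set α → α} (hf : IsStableTransversal (clus T) f) {z u : T.V}
    (hadj : T.tree.Adj z u) (hu : T.IsInterior u) :
    ∃ n, T.tree.Adj u n ∧ n ≠ z ∧ f (T.compSet z u) = f (T.compSet u n) ∧
      f (T.compSet z u) ∈ T.compSet u n := by
  classical
  have hA : T.compSet z u ∈ clus T := T.compSet_mem_clus hadj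
  set x := f (T.compSet z u) with hxdef
  have hx : x ∈ T.compSet z u := hf.1 _ hA
  obtain ⟨hxX, W, hW⟩ := hx
  have hxu : T.ι x ≠ u := fun h => hu ⟨x, hxX, h⟩
  have hp : W.bypass.IsPath := W.bypass_isPath
  have hpav : z ∉ W.bypass.support := fun h => hW (W.support_bypass_subset h)
  obtain ⟨n, hn, q, heq, huq⟩ := T.first_nbr W.bypass.reverse hp.reverse hxu.symm
  have hnz : n ≠ z := by
    intro h
    apply hpav
    rw [← h, ← List.mem_reverse, ← Walk.support_reverse, heq, Walk.support_cons]
    exact List.mem_cons_of_mem _ (Walk.start_mem_support q)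
  have hxB : x ∈ T.compSet u n := by
    refine ⟨hxX, q.reverse, ?_⟩
    rw [Walk.support_reverse, List.mem_reverse]
    exact huq
  have hBsub : T.compSet u n ⊆ T.compSet z u := by
    rintro b ⟨hbX, Wb, hWb⟩
    have hzW : z ∉ Wb.support := by
      intro hz
      exact T.sep_nbrs hadj.symm hn (Ne.symm hnz) (Wb.dropUntil z hz)
        (fun h => hWb (Walk.support_dropUntil_subset _ hz h))
    refine ⟨hbX, Wb.append (Walk.cons hn.symm Walk.nil), ?_⟩
    rw [Walk.mem_support_append_iff]
    rintro (h | h)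
    · exact hzW h
    · simp only [Walk.support_cons, Walk.support_nil, List.mem_cons,
        List.mem_singleton] at h
      rcases h with rfl | h
      · exact hnz rfl
      · rcases h with rfl | h
        · exact hadj.ne rfl
        · cases h
  exact ⟨n, hn, hnz, hf.2 _ hA _ (T.compSet_mem_clus hn) hxB hBsub, hxB⟩

lemma three_nbrs (hT : T.IsFullyResolved) {v : T.V} (hv : T.IsInterior v) :
    ∃ u₁ u₂ u₃ : T.V, u₁ ≠ u₂ ∧ u₁ ≠ u₃ ∧ u₂ ≠ u₃ ∧
      T.tree.neighborSet v = {u₁, u₂, u₃} :=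
  Set.ncard_eq_three.mp (hT v hv)

lemma cord_mem {f : Set α → α} {v u u' : T.V} (hv : T.IsInterior v)
    (h : T.tree.Adj v u) (h' : T.tree.Adj v u') (hne : u ≠ u') :
    s(f (T.compSet v u), f (T.compSet v u')) ∈ tripletCoverOf T f :=
  ⟨v, u, u', hv, h, h', hne, rfl⟩

lemma pathDist_single {w : Sym2 T.V → ℝ} {p q : T.V} (h : T.tree.Adj p q) :
    T.pathDist w p q = w s(p,q) := by
  have hP : (Walk.cons h Walk.nil : T.tree.Walk p q).IsPath := by
    rw [Walk.isPath_def]; simp [h.ne]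
  rw [T.pathDist_eq hP]
  simp

lemma height_det {T' : XTree α X} {w : Sym2 T.V → ℝ} {w' : Sym2 T'.V → ℝ} {f : Set α → α}
    {L : Set (Sym2 α)} (hLdef : L = tripletCoverOf T f)
    (hiso : LIsometric T w T' w' L)
    (hfT : IsStableTransversal (clus T) f)
    {v : T.V} (hv : T.IsInterior v) {u₁ u₂ u₃ : T.V}
    (h₁ : T.tree.Adj v u₁) (h₂ : T.tree.Adj v u₂) (h₃ : T.tree.Adj v u₃)
    (h12 : u₁ ≠ u₂) (h13 : u₁ ≠ u₃) (h23 : u₂ ≠ u₃)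
    {v' : T'.V}
    (b12 : T'.Btw (T'.ι (f (T.compSet v u₁))) v' (T'.ι (f (T.compSet v u₂))))
    (b13 : T'.Btw (T'.ι (f (T.compSet v u₁))) v' (T'.ι (f (T.compSet v u₃))))
    (b23 : T'.Btw (T'.ι (f (T.compSet v u₂))) v' (T'.ι (f (T.compSet v u₃)))) :
    T'.pathDist w' (T'.ι (f (T.compSet v u₁))) v'
      = T.pathDist w (T.ι (f (T.compSet v u₁))) v := by
  set a₁ := f (T.compSet v u₁)
  set a₂ := f (T.compSet v u₂)
  set a₃ := f (T.compSet v u₃)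
  have ha₁ : a₁ ∈ T.compSet v u₁ := hfT.1 _ (T.compSet_mem_clus h₁)
  have ha₂ : a₂ ∈ T.compSet v u₂ := hfT.1 _ (T.compSet_mem_clus h₂)
  have ha₃ : a₃ ∈ T.compSet v u₃ := hfT.1 _ (T.compSet_mem_clus h₃)
  have c12 : T.Btw (T.ι a₁) v (T.ι a₂) := T.btw_v_of_comps h₁ h₂ h12 ha₁ ha₂
  have c13 : T.Btw (T.ι a₁) v (T.ι a₃) := T.btw_v_of_comps h₁ h₃ h13 ha₁ ha₃
  have c23 : T.Btw (T.ι a₂) v (T.ι a₃) := T.btw_v_of_comps h₂ h₃ h23 ha₂ ha₃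
  rw [T.gromov c12 c13 c23, T'.gromov b12 b13 b23]
  rw [hiso s(a₁,a₂) (hLdef ▸ T.cord_mem hv h₁ h₂ h12),
    hiso s(a₁,a₃) (hLdef ▸ T.cord_mem hv h₁ h₃ h13),
    hiso s(a₂,a₃) (hLdef ▸ T.cord_mem hv h₂ h₃ h23)]

/-- The height of any interior vertex above any of its representatives is
determined within `T` itself. -/
lemma height_det_self {w w₂ : Sym2 T.V → ℝ} {f : Set α → α}
    {L : Set (Sym2 α)} (hLdef : L = tripletCoverOf T f)
    (hiso : LIsometric T w T w₂ L)
    (hfT : IsStableTransversal (clus T) f) (hT : T.IsFullyResolved)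
    {v : T.V} (hv : T.IsInterior v) {u : T.V} (h : T.tree.Adj v u) :
    T.pathDist w₂ (T.ι (f (T.compSet v u))) v = T.pathDist w (T.ι (f (T.compSet v u))) v := by
  obtain ⟨u₁, u₂, u₃, h12, h13, h23, hset⟩ := T.three_nbrs hT hv
  have h₁ : T.tree.Adj v u₁ := by rw [← T.tree.mem_neighborSet, hset]; simp
  have h₂ : T.tree.Adj v u₂ := by rw [← T.tree.mem_neighborSet, hset]; simp
  have h₃ : T.tree.Adj v u₃ := by rw [← T.tree.mem_neighborSet, hset]; simp
  have hu : u ∈ ({u₁, u₂, u₃} : Set T.V) := by rw [← hset]; exact h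
  have key : ∀ x y z : T.V, T.tree.Adj v x → T.tree.Adj v y → T.tree.Adj v z →
      x ≠ y → x ≠ z → y ≠ z →
      T.pathDist w₂ (T.ι (f (T.compSet v x))) v = T.pathDist w (T.ι (f (T.compSet v x))) v := by
    intro x y z hx hy hz hxy hxz hyz
    have hax : f (T.compSet v x) ∈ T.compSet v x := hfT.1 _ (T.compSet_mem_clus hx)
    have hay : f (T.compSet v y) ∈ T.compSet v y := hfT.1 _ (T.compSet_mem_clus hy)
    have haz : f (T.compSet v z) ∈ T.compSet v z := hfT.1 _ (T.compSet_mem_clus hz)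
    exact T.height_det hLdef hiso hfT hv hx hy hz hxy hxz hyz
      (T.btw_v_of_comps hx hy hxy hax hay)
      (T.btw_v_of_comps hx hz hxz hax haz)
      (T.btw_v_of_comps hy hz hyz hay haz)
  rcases hu with rfl | rfl | rfl
  · exact key u u₂ u₃ h₁ h₂ h₃ h12 h13 h23
  · exact key u u₁ u₃ h₂ h₁ h₃ (Ne.symm h12) h23 h13
  · exact key u u₁ u₂ h₃ h₁ h₂ (Ne.symm h13) (Ne.symm h23) h12

lemma edge_lasso (hfin : X.Finite) (hcard : 3 ≤ X.ncard) (hT : T.IsFullyResolved)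
    {f : Set α → α} (hfT : IsStableTransversal (clus T) f)
    {L : Set (Sym2 α)} (hLdef : L = tripletCoverOf T f) :
    IsEdgeWeightLasso T L := by
  intro w w₂ hw hw₂ hiso e he
  induction e using Sym2.ind with
  | _ p q =>
  rw [T.tree.mem_edgeSet] at he
  by_cases hp : p ∈ T.ι '' X
  · obtain ⟨a, ha, rfl⟩ := hp
    by_cases hq : q ∈ T.ι '' X
    · obtain ⟨b, hb, rfl⟩ := hq
      exact absurd he (fun h => T.no_adjacent_leaves hfin hcard ha hb h)
    · -- p = ι a leaf, q interior
      have hrep : f (T.compSet q (T.ι a)) = a := T.leaf_rep hfT ha he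
      have hdet := T.height_det_self hLdef hiso hfT hT hq he.symm
      rw [hrep, T.pathDist_single (w := w) he, T.pathDist_single (w := w₂) he] at hdet
      exact hdet.symm
  · by_cases hq : q ∈ T.ι '' X
    · obtain ⟨b, hb, rfl⟩ := hq
      have hrep : f (T.compSet p (T.ι b)) = b := T.leaf_rep hfT hb he.symm
      have hdet := T.height_det_self hLdef hiso hfT hT hp he
      rw [hrep] at hdet
      have e1 : T.pathDist w (T.ι b) p = w s(p, T.ι b) := by
        rw [T.pathDist_symm, T.pathDist_single (w := w) he]
      have e2 : T.pathDist w₂ (T.ι b) p = w₂ s(p, T.ι b) := by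
        rw [T.pathDist_symm, T.pathDist_single (w := w₂) he]
      rw [e1, e2] at hdet
      exact hdet.symm
    · -- both interior
      obtain ⟨n, hn, hnq, hfeq, hxmem⟩ := T.stab_edge hfT (he.symm) hp
      set x := f (T.compSet q p) with hx
      have hxq : x ∈ T.compSet q p := hfT.1 _ (T.compSet_mem_clus he.symm)
      have hbtw : T.Btw (T.ι x) p q := T.btw_comp he.symm hxq
      have hdq := T.height_det_self hLdef hiso hfT hT hq he.symm
      have hdp := T.height_det_self hLdef hiso hfT hT hp hn
      rw [← hfeq] at hdp
      have hsplit : T.pathDist w (T.ι x) q = T.pathDist w (T.ι x) p + w s(p,q) := by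
        rw [T.pathDist_add hbtw, T.pathDist_single (w := w) he]
      have hsplit₂ : T.pathDist w₂ (T.ι x) q = T.pathDist w₂ (T.ι x) p + w₂ s(p,q) := by
        rw [T.pathDist_add hbtw, T.pathDist_single (w := w₂) he]
      linarith [hdq, hdp, hsplit, hsplit₂]

lemma interior_of_two_nbrs {z u u₂ : T.V} (h1 : T.tree.Adj z u) (h2 : T.tree.Adj z u₂)
    (hne : u ≠ u₂) : T.IsInterior z := by
  letI := T.fintypeV
  intro hz
  have hcard1 : (T.tree.neighborSet z).ncard = 1 := (T.leaf_iff z).mpr hz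
  have h2' : 1 < (T.tree.neighborSet z).ncard := by
    rw [Set.one_lt_ncard_iff (Set.toFinite _)]
    exact ⟨u, u₂, h1, h2, hne⟩
  omega

lemma mid_interior {u v : T.V} {p : T.tree.Walk u v} (hp : p.IsPath) {z : T.V}
    (hz : z ∈ p.support) (hzu : z ≠ u) (hzv : z ≠ v) : T.IsInterior z := by
  classical
  have ht : (p.takeUntil z hz).IsPath := hp.takeUntil hz
  have hd : (p.dropUntil z hz).IsPath := hp.dropUntil hz
  obtain ⟨n₁, hn₁, q₁, heq₁, h₁⟩ := T.first_nbr (p.takeUntil z hz).reverse ht.reverse hzu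
  obtain ⟨n₂, hn₂, q₂, heq₂, h₂⟩ := T.first_nbr (p.dropUntil z hz) hd hzv
  refine T.interior_of_two_nbrs hn₁ hn₂ ?_
  intro hnn
  subst hnn
  -- n₁ is in the takeUntil support, and also in dropUntil's support tail
  have hmem₁ : n₁ ∈ (p.takeUntil z hz).support := by
    rw [← List.mem_reverse, ← Walk.support_reverse, heq₁, Walk.support_cons]
    exact List.mem_cons_of_mem _ (Walk.start_mem_support q₁)
  have hmem₂ : n₁ ∈ (p.dropUntil z hz).support.tail := by
    have : (p.dropUntil z hz).support = z :: (p.dropUntil z hz).support.tail := by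
      have := Walk.support_eq_cons (p.dropUntil z hz); simpa using this
    have hmem : n₁ ∈ (p.dropUntil z hz).support := by
      rw [heq₂, Walk.support_cons]
      exact List.mem_cons_of_mem _ (Walk.start_mem_support q₂)
    rw [this] at hmem
    rcases List.mem_cons.mp hmem with h | h
    · exact absurd h hn₁.ne'
    · exact h
  have hnd := hp
  rw [← Walk.take_spec p hz, Walk.isPath_def, Walk.support_append, List.nodup_append] at hnd
  exact hnd.2.2 n₁ hmem₁ n₁ hmem₂ rfl

lemma support_interior {u v : T.V} (hu : T.IsInterior u) (hv : T.IsInterior v)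
    {z : T.V} (hz : z ∈ (T.treePath u v).support) : T.IsInterior z := by
  by_cases h1 : z = u
  · exact h1 ▸ hu
  by_cases h2 : z = v
  · exact h2 ▸ hv
  exact T.mid_interior (T.treePath_isPath u v) hz h1 h2

lemma pathDist_pos {w : Sym2 T.V → ℝ} (hw : T.IsProperWeighting w) {u v : T.V}
    (hu : T.IsInterior u) (hv : T.IsInterior v) (hne : u ≠ v) :
    0 < T.pathDist w u v := by
  unfold pathDist
  refine List.sum_pos _ ?_ ?_
  · intro x hx
    rw [List.mem_map] at hx
    obtain ⟨e, he, rfl⟩ := hx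
    refine hw.2 e ((T.treePath u v).edges_subset_edgeSet he) ?_
    intro y hy
    induction e using Sym2.ind with
    | _ s t =>
      rcases Sym2.mem_iff.mp hy with rfl | rfl
      · exact T.support_interior hu hv ((T.treePath u v).fst_mem_support_of_mem_edges he)
      · exact T.support_interior hu hv ((T.treePath u v).snd_mem_support_of_mem_edges he)
  · intro h0
    rw [List.map_eq_nil_iff] at h0
    cases heq : T.treePath u v with
    | nil => exact hne rfl
    | cons h q => rw [heq] at h0; simp at h0

lemma leaf_not_mid {a : α} (ha : a ∈ X) {u v : T.V} (h : T.Btw u (T.ι a) v)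
    (hu : T.ι a ≠ u) (hv : T.ι a ≠ v) : False :=
  T.mid_interior (T.treePath_isPath u v) h hu hv ⟨a, ha, rfl⟩

lemma mem_treePath_symm {u v y : T.V} :
    y ∈ (T.treePath u v).support ↔ y ∈ (T.treePath v u).support := by
  rw [T.treePath_symm u v, Walk.support_reverse, List.mem_reverse]

lemma adj_of_support_endpoints {u v : T.V} (hne : u ≠ v)
    (h : ∀ y ∈ (T.treePath u v).support, y = u ∨ y = v) : T.tree.Adj u v := by
  cases heq : T.treePath u v with
  | nil => exact absurd rfl hne
  | cons hadj q =>
    rename_i n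
    have hn : n = u ∨ n = v := by
      refine h n ?_
      rw [heq, Walk.support_cons]
      exact List.mem_cons_of_mem _ (Walk.start_mem_support q)
    rcases hn with rfl | rfl
    · exact absurd rfl hadj.ne
    · exact hadj

lemma interior_deg_ge (hfin : X.Finite) (hcard : 3 ≤ X.ncard) {v : T.V}
    (hv : T.IsInterior v) : 3 ≤ (T.tree.neighborSet v).ncard := by
  letI := T.fintypeV
  have h1 : (T.tree.neighborSet v).ncard ≠ 1 := fun h => hv ((T.leaf_iff v).mp h)
  have h2 : (T.tree.neighborSet v).ncard ≠ 2 := T.no_deg_two v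
  have h0 : (T.tree.neighborSet v).ncard ≠ 0 := by
    intro h0
    -- v has no neighbors, yet there exists another vertex
    have hX : ∃ a ∈ X, T.ι a ≠ v := by
      by_contra hno
      push_neg at hno
      have hsub : X ⊆ T.ι ⁻¹' {v} := fun a ha => hno a ha
      have : X.ncard ≤ 1 := by
        have : ∀ a ∈ X, ∀ b ∈ X, a = b := by
          intro a ha b hb
          exact T.ι_injOn ha hb ((hno a ha).trans (hno b hb).symm)
        rcases X.eq_empty_or_nonempty with h | ⟨a, ha⟩
        · simp [h]
        · have : X ⊆ {a} := fun b hb => (this b hb a ha)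
          exact le_trans (Set.ncard_le_ncard this (Set.finite_singleton a)) (by simp)
      omega
    obtain ⟨a, ha, hav⟩ := hX
    have hreach : T.tree.Reachable v (T.ι a) := T.isTree.isConnected.preconnected v (T.ι a)
    obtain ⟨p⟩ := hreach
    cases p with
    | nil => exact hav rfl
    | cons h q =>
      have hmem : _ ∈ T.tree.neighborSet v := h
      rw [Set.ncard_eq_zero (Set.toFinite _)] at h0
      exact absurd (h0 ▸ hmem) (Set.notMem_empty _)
  omega

lemma counting_core (hfin : X.Finite) (hcard : 3 ≤ X.ncard) :
    letI := T.fintypeV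
    (Fintype.card T.V + 2 ≤ 2 * X.ncard) ∧
      (T.IsFullyResolved → Fintype.card T.V + 2 = 2 * X.ncard) := by
  letI := T.fintypeV
  letI : DecidableEq T.V := Classical.decEq _
  letI : DecidableRel T.tree.Adj := Classical.decRel _
  set n := X.ncard with hn
  set Lf : Finset T.V := (hfin.image T.ι).toFinset with hLf
  have hLf_mem : ∀ v, v ∈ Lf ↔ v ∈ T.ι '' X := by
    intro v; rw [hLf, Set.Finite.mem_toFinset]
  have hLf_card : Lf.card = n := by
    rw [hLf, ← Set.ncard_eq_toFinset_card, Set.ncard_image_of_injOn T.ι_injOn]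
  have hdeg : ∀ v : T.V, T.tree.degree v = (T.tree.neighborSet v).ncard := by
    intro v
    rw [← SimpleGraph.card_neighborSet_eq_degree]
    rw [Set.ncard_eq_toFinset_card', Set.toFinset_card]
  have hedge : T.tree.edgeFinset.card + 1 = Fintype.card T.V := T.isTree.card_edgeFinset
  have hsum : ∑ v, T.tree.degree v = 2 * T.tree.edgeFinset.card :=
    T.tree.sum_degrees_eq_twice_card_edges
  have hsplit : ∑ v ∈ Finset.univ \ Lf, T.tree.degree v + ∑ v ∈ Lf, T.tree.degree v
      = ∑ v, T.tree.degree v := Finset.sum_sdiff (Finset.subset_univ Lf)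
  have hleafdeg : ∀ v ∈ Lf, T.tree.degree v = 1 := by
    intro v hv
    rw [hdeg]
    exact (T.leaf_iff v).mpr ((hLf_mem v).mp hv)
  have hleafsum : ∑ v ∈ Lf, T.tree.degree v = n := by
    rw [Finset.sum_congr rfl hleafdeg, Finset.sum_const, smul_eq_mul, mul_one, hLf_card]
  have hintn : ∀ v ∈ Finset.univ \ Lf, T.IsInterior v := by
    intro v hv
    rw [Finset.mem_sdiff] at hv
    exact fun h => hv.2 ((hLf_mem v).mpr h)
  have hcardsdiff : (Finset.univ \ Lf).card = Fintype.card T.V - n := by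
    rw [Finset.card_sdiff_of_subset (Finset.subset_univ Lf), hLf_card, Finset.card_univ]
  have hnleV : n ≤ Fintype.card T.V := by
    rw [← hLf_card, ← Finset.card_univ]
    exact Finset.card_le_card (Finset.subset_univ Lf)
  constructor
  · have hintsum : 3 * (Finset.univ \ Lf).card ≤ ∑ v ∈ Finset.univ \ Lf, T.tree.degree v := by
      have h3 : ∀ v ∈ Finset.univ \ Lf, 3 ≤ T.tree.degree v := by
        intro v hv
        rw [hdeg]
        exact T.interior_deg_ge hfin hcard (hintn v hv)
      calc 3 * (Finset.univ \ Lf).card = ∑ _v ∈ Finset.univ \ Lf, 3 := by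
            rw [Finset.sum_const, smul_eq_mul, mul_comm]
        _ ≤ _ := Finset.sum_le_sum h3
    rw [hcardsdiff] at hintsum
    omega
  · intro hT
    have hintsum : ∑ v ∈ Finset.univ \ Lf, T.tree.degree v = 3 * (Finset.univ \ Lf).card := by
      have h3 : ∀ v ∈ Finset.univ \ Lf, T.tree.degree v = 3 := by
        intro v hv
        rw [hdeg]
        exact hT v (hintn v hv)
      rw [Finset.sum_congr rfl h3, Finset.sum_const, smul_eq_mul, mul_comm]
    rw [hcardsdiff] at hintsum
    omega

lemma rep_mem_X {f : Set α → α} (hfT : IsStableTransversal (clus T) f)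
    {v u : T.V} (h : T.tree.Adj v u) : f (T.compSet v u) ∈ X :=
  (hfT.1 _ (T.compSet_mem_clus h)).1

lemma rep_ne {f : Set α → α} (hfT : IsStableTransversal (clus T) f)
    {v u u' : T.V} (h : T.tree.Adj v u) (h' : T.tree.Adj v u') (hne : u ≠ u') :
    f (T.compSet v u) ≠ f (T.compSet v u') := by
  intro heq
  exact T.compSet_disjoint h h' hne (hfT.1 _ (T.compSet_mem_clus h))
    (heq ▸ hfT.1 _ (T.compSet_mem_clus h'))

lemma exists_phi (hT : T.IsFullyResolved) {f : Set α → α}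
    (hfT : IsStableTransversal (clus T) f) (T' : XTree α X) :
    ∃ φ : T.V → T'.V,
      (∀ a ∈ X, φ (T.ι a) = T'.ι a) ∧
      (∀ v, T.IsInterior v → T'.IsInterior (φ v)) ∧
      (∀ v, T.IsInterior v → ∀ u u', T.tree.Adj v u → T.tree.Adj v u' → u ≠ u' →
        T'.Btw (T'.ι (f (T.compSet v u))) (φ v) (T'.ι (f (T.compSet v u')))) := by
  classical
  have H : ∀ v : T.V, ∃ v' : T'.V,
      (∀ a ∈ X, T.ι a = v → v' = T'.ι a) ∧
      (T.IsInterior v → T'.IsInterior v' ∧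
        ∀ u u', T.tree.Adj v u → T.tree.Adj v u' → u ≠ u' →
          T'.Btw (T'.ι (f (T.compSet v u))) v' (T'.ι (f (T.compSet v u')))) := by
    intro v
    by_cases hv : v ∈ T.ι '' X
    · obtain ⟨a, ha, rfl⟩ := hv
      refine ⟨T'.ι a, ?_, fun hint => absurd ⟨a, ha, rfl⟩ hint⟩
      intro b hb hba
      rw [T.ι_injOn ha hb hba.symm]
    · have hint : T.IsInterior v := hv
      obtain ⟨u₁, u₂, u₃, h12, h13, h23, hset⟩ := T.three_nbrs hT hint
      have h₁ : T.tree.Adj v u₁ := by rw [← T.tree.mem_neighborSet, hset]; simp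
      have h₂ : T.tree.Adj v u₂ := by rw [← T.tree.mem_neighborSet, hset]; simp
      have h₃ : T.tree.Adj v u₃ := by rw [← T.tree.mem_neighborSet, hset]; simp
      set a₁ := f (T.compSet v u₁) with ha₁def
      set a₂ := f (T.compSet v u₂) with ha₂def
      set a₃ := f (T.compSet v u₃) with ha₃def
      have haX₁ : a₁ ∈ X := T.rep_mem_X hfT h₁
      have haX₂ : a₂ ∈ X := T.rep_mem_X hfT h₂
      have haX₃ : a₃ ∈ X := T.rep_mem_X hfT h₃
      have hne12 : a₁ ≠ a₂ := T.rep_ne hfT h₁ h₂ h12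
      have hne13 : a₁ ≠ a₃ := T.rep_ne hfT h₁ h₃ h13
      have hne23 : a₂ ≠ a₃ := T.rep_ne hfT h₂ h₃ h23
      obtain ⟨m, hm12, hm13, hm23⟩ := T'.exists_median (T'.ι a₁) (T'.ι a₂) (T'.ι a₃)
      refine ⟨m, fun b hb hbv => absurd ⟨b, hb, hbv⟩ hv, fun _ => ⟨?_, ?_⟩⟩
      · -- m is interior in T'
        intro hm
        obtain ⟨b, hb, hbm⟩ := hm
        by_cases hb1 : b = a₁
        · subst hb1
          refine T'.leaf_not_mid hb (hbm ▸ hm23) ?_ ?_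
          · exact fun h => hne12 (T'.ι_injOn hb haX₂ h)
          · exact fun h => hne13 (T'.ι_injOn hb haX₃ h)
        · by_cases hb2 : b = a₂
          · subst hb2
            refine T'.leaf_not_mid hb (hbm ▸ hm13) ?_ ?_
            · exact fun h => hne12 (T'.ι_injOn hb haX₁ h).symm
            · exact fun h => hne23 (T'.ι_injOn hb haX₃ h)
          · refine T'.leaf_not_mid hb (hbm ▸ hm12) ?_ ?_
            · exact fun h => hb1 (T'.ι_injOn hb haX₁ h)
            · exact fun h => hb2 (T'.ι_injOn hb haX₂ h)
      · intro u u' hu hu' hne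
        have hmemu : u ∈ ({u₁, u₂, u₃} : Set T.V) := by rw [← hset]; exact hu
        have hmemu' : u' ∈ ({u₁, u₂, u₃} : Set T.V) := by rw [← hset]; exact hu'
        rcases hmemu with rfl | rfl | rfl <;> rcases hmemu' with rfl | rfl | rfl <;>
          first
          | exact absurd rfl hne
          | exact hm12
          | exact hm13
          | exact hm23
          | exact T'.btw_symm hm12
          | exact T'.btw_symm hm13
          | exact T'.btw_symm hm23
  choose φ hφ using H
  refine ⟨φ, ?_, fun v hv => (hφ v).2 hv |>.1, fun v hv => ((hφ v).2 hv).2⟩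
  intro a ha
  exact (hφ (T.ι a)).1 a ha rfl

structure PhiCtx (T T' : XTree α X) (f : Set α → α) (w : Sym2 T.V → ℝ)
    (w' : Sym2 T'.V → ℝ) (L : Set (Sym2 α)) : Type where
  hfin : X.Finite
  hcard : 3 ≤ X.ncard
  hT : T.IsFullyResolved
  hfT : IsStableTransversal (clus T) f
  hLdef : L = tripletCoverOf T f
  hiso : LIsometric T w T' w' L
  hw : T.IsProperWeighting w
  hw' : T'.IsProperWeighting w'
  φ : T.V → T'.V
  h1 : ∀ a ∈ X, φ (T.ι a) = T'.ι a
  h2 : ∀ v, T.IsInterior v → T'.IsInterior (φ v)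
  h4 : ∀ v, T.IsInterior v → ∀ u u', T.tree.Adj v u → T.tree.Adj v u' → u ≠ u' →
    T'.Btw (T'.ι (f (T.compSet v u))) (φ v) (T'.ι (f (T.compSet v u')))

variable {T' : XTree α X} {f : Set α → α} {w : Sym2 T.V → ℝ} {w' : Sym2 T'.V → ℝ}
  {L : Set (Sym2 α)}

lemma phi_height (c : PhiCtx T T' f w w' L) {v : T.V} (hv : T.IsInterior v)
    {u : T.V} (h : T.tree.Adj v u) :
    T'.pathDist w' (T'.ι (f (T.compSet v u))) (c.φ v)
      = T.pathDist w (T.ι (f (T.compSet v u))) v := by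
  obtain ⟨u₁, u₂, u₃, h12, h13, h23, hset⟩ := T.three_nbrs c.hT hv
  have h₁ : T.tree.Adj v u₁ := by rw [← T.tree.mem_neighborSet, hset]; simp
  have h₂ : T.tree.Adj v u₂ := by rw [← T.tree.mem_neighborSet, hset]; simp
  have h₃ : T.tree.Adj v u₃ := by rw [← T.tree.mem_neighborSet, hset]; simp
  have hu : u ∈ ({u₁, u₂, u₃} : Set T.V) := by rw [← hset]; exact h
  have key : ∀ x y z : T.V, T.tree.Adj v x → T.tree.Adj v y → T.tree.Adj v z →
      x ≠ y → x ≠ z → y ≠ z →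
      T'.pathDist w' (T'.ι (f (T.compSet v x))) (c.φ v)
        = T.pathDist w (T.ι (f (T.compSet v x))) v := by
    intro x y z hx hy hz hxy hxz hyz
    exact T.height_det c.hLdef c.hiso c.hfT hv hx hy hz hxy hxz hyz
      (c.h4 v hv x y hx hy hxy) (c.h4 v hv x z hx hz hxz) (c.h4 v hv y z hy hz hyz)
  rcases hu with rfl | rfl | rfl
  · exact key u u₂ u₃ h₁ h₂ h₃ h12 h13 h23
  · exact key u u₁ u₃ h₂ h₁ h₃ (Ne.symm h12) h23 h13
  · exact key u u₁ u₂ h₃ h₁ h₂ (Ne.symm h13) (Ne.symm h23) h12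

lemma phi_step (c : PhiCtx T T' f w w' L) {u z : T.V} (hadj : T.tree.Adj u z)
    (hz : T.IsInterior z) :
    T'.Btw (T'.ι (f (T.compSet z u))) (c.φ u) (c.φ z) ∧
      T'.pathDist w' (c.φ u) (c.φ z) = T.pathDist w u z := by
  by_cases hu : u ∈ T.ι '' X
  · obtain ⟨a, ha, rfl⟩ := hu
    have hrep : f (T.compSet z (T.ι a)) = a := T.leaf_rep c.hfT ha hadj
    have hφu : c.φ (T.ι a) = T'.ι a := c.h1 a ha
    constructor
    · rw [hrep, hφu]
      exact T'.btw_left _ _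
    · have hh := T.phi_height c hz hadj.symm
      rw [hrep] at hh
      rw [hφu]
      exact hh
  · have huI : T.IsInterior u := hu
    obtain ⟨n, hn, hnz, hxn, hxmem⟩ := T.stab_edge c.hfT hadj.symm huI
    obtain ⟨n', hn', hn'u, hyn', hymem⟩ := T.stab_edge c.hfT hadj hz
    set x := f (T.compSet z u) with hxdef
    set y := f (T.compSet u z) with hydef
    have hBz : T'.Btw (T'.ι x) (c.φ z) (T'.ι y) := by
      have hb := c.h4 z hz u n' hadj.symm hn' (Ne.symm hn'u)
      rw [← hyn'] at hb
      exact hb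
    have hBu : T'.Btw (T'.ι x) (c.φ u) (T'.ι y) := by
      have hb := c.h4 u huI n z hn hadj hnz
      rw [← hxn] at hb
      exact hb
    have hhu : T'.pathDist w' (T'.ι x) (c.φ u) = T.pathDist w (T.ι x) u := by
      have hh := T.phi_height c huI hn
      rw [← hxn] at hh
      exact hh
    have hhz : T'.pathDist w' (T'.ι x) (c.φ z) = T.pathDist w (T.ι x) z :=
      T.phi_height c hz hadj.symm
    have hxz : x ∈ T.compSet z u := c.hfT.1 _ (T.compSet_mem_clus hadj.symm)
    have hTb : T.Btw (T.ι x) u z := T.btw_comp hadj.symm hxz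
    have hTd : T.pathDist w (T.ι x) z = T.pathDist w (T.ι x) u + w s(u,z) := by
      rw [T.pathDist_add hTb, T.pathDist_single (w := w) hadj]
    have hwpos : 0 < w s(u,z) := by
      refine c.hw.2 _ ((T.tree.mem_edgeSet).mpr hadj) ?_
      intro t ht
      rcases Sym2.mem_iff.mp ht with rfl | rfl
      · exact huI
      · exact hz
    have hsingle : T.pathDist w u z = w s(u,z) := T.pathDist_single hadj
    rcases T'.btw_trichotomy hBu hBz with hB | hB
    · have hsum := T'.pathDist_add (w := w') hB
      refine ⟨hB, ?_⟩
      rw [hhu, hhz] at hsum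
      rw [hsingle]
      linarith
    · exfalso
      have hsum := T'.pathDist_add (w := w') hB
      have hnn := T'.pathDist_nonneg c.hw'.1 (c.φ z) (c.φ u)
      rw [hhu, hhz] at hsum
      linarith

lemma phi_step_dist (c : PhiCtx T T' f w w' L) {u z : T.V} (hadj : T.tree.Adj u z) :
    T'.pathDist w' (c.φ u) (c.φ z) = T.pathDist w u z := by
  by_cases hz : z ∈ T.ι '' X
  · by_cases hu : u ∈ T.ι '' X
    · obtain ⟨a, ha, rfl⟩ := hu
      obtain ⟨b, hb, rfl⟩ := hz
      exact (T.no_adjacent_leaves c.hfin c.hcard ha hb hadj).elim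
    · have hh := (T.phi_step c hadj.symm hu).2
      rw [T'.pathDist_symm w' (c.φ u) (c.φ z), T.pathDist_symm w u z]
      exact hh
  · exact (T.phi_step c hadj hz).2

lemma phi_ne (c : PhiCtx T T' f w w' L) {u z : T.V} (hadj : T.tree.Adj u z) :
    c.φ u ≠ c.φ z := by
  by_cases hu : u ∈ T.ι '' X
  · obtain ⟨a, ha, rfl⟩ := hu
    by_cases hz : z ∈ T.ι '' X
    · obtain ⟨b, hb, rfl⟩ := hz
      exact (T.no_adjacent_leaves c.hfin c.hcard ha hb hadj).elim
    · intro heq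
      refine c.h2 z hz ?_
      exact ⟨a, ha, by rw [← heq, c.h1 a ha]⟩
  · by_cases hz : z ∈ T.ι '' X
    · obtain ⟨b, hb, rfl⟩ := hz
      intro heq
      refine c.h2 u hu ?_
      exact ⟨b, hb, by rw [heq, c.h1 b hb]⟩
    · intro heq
      have hd := T.phi_step_dist c hadj
      rw [heq, T'.pathDist_self] at hd
      have hpos := T.pathDist_pos c.hw hu hz hadj.ne
      linarith

lemma phi_local (c : PhiCtx T T' f w w' L) {u z z₂ : T.V} (h1 : T.tree.Adj u z)
    (h2 : T.tree.Adj z z₂) (hne : u ≠ z₂) : T'.Btw (c.φ u) (c.φ z) (c.φ z₂) := by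
  have hz : T.IsInterior z := T.interior_of_two_nbrs h1.symm h2 hne
  have S1 := T.phi_step c h1 hz
  have S2 := T.phi_step c h2.symm hz
  have hmid := c.h4 z hz u z₂ h1.symm h2 hne
  have hq1sub : ∀ y ∈ (T'.treePath (c.φ u) (c.φ z)).support,
      y ∈ (T'.treePath (T'.ι (f (T.compSet z u))) (c.φ z)).support :=
    T'.support_sub_right S1.1
  have hq2sub : ∀ y ∈ (T'.treePath (c.φ z) (c.φ z₂)).support,
      y ∈ (T'.treePath (c.φ z) (T'.ι (f (T.compSet z z₂)))).support := by
    intro y hy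
    rw [T'.mem_treePath_symm] at hy ⊢
    exact T'.support_sub_right S2.1 y hy
  have hint : ∀ y, y ∈ (T'.treePath (c.φ u) (c.φ z)).support →
      y ∈ (T'.treePath (c.φ z) (c.φ z₂)).support → y = c.φ z := by
    intro y hy1 hy2
    exact T'.split_inter hmid y (hq1sub y hy1) (hq2sub y hy2)
  have happ : ((T'.treePath (c.φ u) (c.φ z)).append (T'.treePath (c.φ z) (c.φ z₂))).IsPath :=
    T'.append_isPath (T'.treePath_isPath _ _) (T'.treePath_isPath _ _) hint
  have heq := T'.path_unique happ
  show c.φ z ∈ (T'.treePath (c.φ u) (c.φ z₂)).support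
  rw [← heq, Walk.mem_support_append_iff]
  exact Or.inl (Walk.end_mem_support _)

lemma phi_global_btw (c : PhiCtx T T' f w w' L) : ∀ {z v : T.V} (q : T.tree.Walk z v)
    {u : T.V} (h : T.tree.Adj u z), (Walk.cons h q).IsPath →
    T'.Btw (c.φ u) (c.φ z) (c.φ v) := by
  intro z v q
  induction q with
  | nil => exact fun h hp => T'.btw_right _ _
  | @cons z z₂ v h₂ q₂ ih =>
    intro u h hp
    have hp₂ : (Walk.cons h₂ q₂).IsPath := hp.of_cons
    have hne : u ≠ z₂ := by
      rw [Walk.cons_isPath_iff] at hp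
      intro huz
      apply hp.2
      rw [huz, Walk.support_cons]
      exact List.mem_cons_of_mem _ (Walk.start_mem_support q₂)
    have B1 : T'.Btw (c.φ z) (c.φ z₂) (c.φ v) := ih h₂ hp₂
    have B0 : T'.Btw (c.φ u) (c.φ z) (c.φ z₂) := T.phi_local c h h₂ hne
    have hne' : c.φ z ≠ c.φ z₂ := T.phi_ne c h₂
    have B2 : T'.Btw (c.φ u) (c.φ z₂) (c.φ v) := T'.btw_trans B0 B1 hne'
    exact T'.btw_trans2 B0 B2

lemma phi_global_dist (c : PhiCtx T T' f w w' L) : ∀ {u v : T.V} (p : T.tree.Walk u v),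
    p.IsPath → T'.pathDist w' (c.φ u) (c.φ v) = T.pathDist w u v := by
  intro u v p
  induction p with
  | nil => intro _; rw [T'.pathDist_self, T.pathDist_self]
  | @cons u z v h q ih =>
    intro hp
    have hq : q.IsPath := hp.of_cons
    have hBtw : T'.Btw (c.φ u) (c.φ z) (c.φ v) := T.phi_global_btw c q h hp
    have hTb : T.Btw u z v := by
      show z ∈ (T.treePath u v).support
      rw [← T.path_unique hp, Walk.support_cons]
      exact List.mem_cons_of_mem _ (Walk.start_mem_support q)
    rw [T'.pathDist_add hBtw, T.pathDist_add hTb, T.phi_step_dist c h, ih hq]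

lemma dist_pos_aux (hfin : X.Finite) (hcard : 3 ≤ X.ncard) {w : Sym2 T.V → ℝ}
    (hw : T.IsProperWeighting w) {u v z : T.V} (h : T.tree.Adj u v)
    (hz : T.IsInterior z) (hzu : z ≠ u) (hzv : z ≠ v) : 0 < T.pathDist w u z := by
  by_cases hu : u ∈ T.ι '' X
  · obtain ⟨a, ha, rfl⟩ := hu
    have hvint : T.IsInterior v := by
      intro hvim
      obtain ⟨b, hb, rfl⟩ := hvim
      exact T.no_adjacent_leaves hfin hcard ha hb h
    obtain ⟨n, hn, q, heq, _⟩ := T.first_nbr (T.treePath (T.ι a) z)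
      (T.treePath_isPath _ _) (Ne.symm hzu)
    have hnv : n = v := by
      have hmem : n ∈ T.tree.neighborSet (T.ι a) := hn
      rw [T.nbr_unique ha h] at hmem
      exact hmem
    have hB : T.Btw (T.ι a) v z := by
      show v ∈ (T.treePath (T.ι a) z).support
      rw [heq, Walk.support_cons]
      exact List.mem_cons_of_mem _ (hnv ▸ Walk.start_mem_support q)
    rw [T.pathDist_add hB]
    have hp1 := T.pathDist_pos hw hvint hz (fun hh => hzv hh.symm)
    have hp2 := T.pathDist_nonneg hw.1 (T.ι a) v
    linarith
  · exact T.pathDist_pos hw hu hz (Ne.symm hzu)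

lemma topo_lasso (hfin : X.Finite) (hcard : 3 ≤ X.ncard) (hT : T.IsFullyResolved)
    {f : Set α → α} (hfT : IsStableTransversal (clus T) f)
    {L : Set (Sym2 α)} (hLdef : L = tripletCoverOf T f) :
    IsTopologicalLasso T L := by
  intro T' w w' hw hw' hiso
  classical
  obtain ⟨φ, hφ1, hφ2, hφ4⟩ := T.exists_phi hT hfT T'
  let c : PhiCtx T T' f w w' L :=
    ⟨hfin, hcard, hT, hfT, hLdef, hiso, hw, hw', φ, hφ1, hφ2, hφ4⟩
  letI : Fintype T.V := T.fintypeV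
  letI : Fintype T'.V := T'.fintypeV
  letI : DecidableEq T.V := Classical.decEq _
  letI : DecidableEq T'.V := Classical.decEq _
  letI : DecidableRel T.tree.Adj := Classical.decRel _
  letI : DecidableRel T'.tree.Adj := Classical.decRel _
  have hcφ : c.φ = φ := rfl
  have hinj : Function.Injective φ := by
    intro v₁ v₂ heq
    by_cases hv₁ : v₁ ∈ T.ι '' X
    · obtain ⟨a, ha, rfl⟩ := hv₁
      by_cases hv₂ : v₂ ∈ T.ι '' X
      · obtain ⟨b, hb, rfl⟩ := hv₂
        rw [hφ1 a ha, hφ1 b hb] at heq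
        rw [T'.ι_injOn ha hb heq]
      · exact absurd ⟨a, ha, by rw [← heq, hφ1 a ha]⟩ (hφ2 v₂ hv₂)
    · by_cases hv₂ : v₂ ∈ T.ι '' X
      · obtain ⟨b, hb, rfl⟩ := hv₂
        exact absurd ⟨b, hb, by rw [heq, hφ1 b hb]⟩ (hφ2 v₁ hv₁)
      · by_contra hne
        have hpos := T.pathDist_pos hw hv₁ hv₂ hne
        have hd := T.phi_global_dist c (T.treePath v₁ v₂) (T.treePath_isPath _ _)
        rw [hcφ, heq, T'.pathDist_self] at hd
        linarith
  have hcT := (T.counting_core hfin hcard).2 hT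
  have hcT' := (T'.counting_core hfin hcard).1
  have hcardge : Fintype.card T.V ≤ Fintype.card T'.V := Fintype.card_le_of_injective φ hinj
  have hcardeq : Fintype.card T.V = Fintype.card T'.V := by omega
  have hbij : Function.Bijective φ :=
    (Fintype.bijective_iff_injective_and_card φ).mpr ⟨hinj, hcardeq⟩
  have hadjfwd : ∀ {u v : T.V}, T.tree.Adj u v → T'.tree.Adj (φ u) (φ v) := by
    intro u v h
    have hne : φ u ≠ φ v := T.phi_ne c h
    refine T'.adj_of_support_endpoints hne ?_
    intro y hy
    by_contra hynot
    push_neg at hynot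
    obtain ⟨hyu, hyv⟩ := hynot
    obtain ⟨z, rfl⟩ := hbij.2 y
    have hzu : z ≠ u := fun hzz => hyu (by rw [hzz])
    have hzv : z ≠ v := fun hzz => hyv (by rw [hzz])
    have hyint : T'.IsInterior (φ z) := T'.mid_interior (T'.treePath_isPath _ _) hy hyu hyv
    have hzint : T.IsInterior z := by
      intro hzim
      obtain ⟨a, ha, rfl⟩ := hzim
      exact hyint ⟨a, ha, (hφ1 a ha).symm⟩
    have hdist := T'.pathDist_add (w := w') hy
    have e0 := T.phi_global_dist c (T.treePath u v) (T.treePath_isPath _ _)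
    have e1 := T.phi_global_dist c (T.treePath u z) (T.treePath_isPath _ _)
    have e2 := T.phi_global_dist c (T.treePath z v) (T.treePath_isPath _ _)
    rw [hcφ] at e0 e1 e2
    obtain ⟨m, hm1, hm2, hm3⟩ := T.exists_median u v z
    have hmuv : m = u ∨ m = v := by
      have hP : (Walk.cons h Walk.nil : T.tree.Walk u v).IsPath := by
        rw [Walk.isPath_def]; simp [h.ne]
      have hm1' := hm1
      show _
      rw [Btw] at hm1'
      rw [← T.path_unique hP, Walk.support_cons, Walk.support_nil] at hm1'
      rcases List.mem_cons.mp hm1' with h' | h'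
      · exact Or.inl h'
      · rcases List.mem_cons.mp h' with h'' | h''
        · exact Or.inr h''
        · cases h''
    have hsymm1 : T.pathDist w z v = T.pathDist w v z := T.pathDist_symm w z v
    have hsymm2 : T.pathDist w v u = T.pathDist w u v := T.pathDist_symm w v u
    rcases hmuv with hmu | hmv
    · rw [hmu] at hm3
      have hadd := T.pathDist_add (w := w) hm3
      have hpos := T.dist_pos_aux hfin hcard hw h hzint hzu hzv
      linarith
    · rw [hmv] at hm2
      have hadd := T.pathDist_add (w := w) hm2
      have hpos := T.dist_pos_aux hfin hcard hw h.symm hzint hzv hzu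
      have hsymm3 : T.pathDist w v z = T.pathDist w z v := T.pathDist_symm w v z
      linarith
  have hE := T.isTree.card_edgeFinset
  have hE' := T'.isTree.card_edgeFinset
  have hEcard : T.tree.edgeFinset.card = T'.tree.edgeFinset.card := by omega
  have himg : T.tree.edgeFinset.image (Sym2.map φ) = T'.tree.edgeFinset := by
    apply Finset.eq_of_subset_of_card_le
    · intro e' he'
      rw [Finset.mem_image] at he'
      obtain ⟨e, he, rfl⟩ := he'
      rw [mem_edgeFinset] at he ⊢
      induction e using Sym2.ind with
      | _ a b =>
        rw [Sym2.map_pair_eq, SimpleGraph.mem_edgeSet]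
        exact hadjfwd ((T.tree.mem_edgeSet).mp he)
    · rw [Finset.card_image_of_injective _ (Sym2.map.injective hinj), hEcard]
  have hadjback : ∀ {u v : T.V}, T'.tree.Adj (φ u) (φ v) → T.tree.Adj u v := by
    intro u v h'
    have hmem : s(φ u, φ v) ∈ T'.tree.edgeFinset := by
      rw [mem_edgeFinset, SimpleGraph.mem_edgeSet]; exact h'
    rw [← himg, Finset.mem_image] at hmem
    obtain ⟨e, he, heq⟩ := hmem
    induction e using Sym2.ind with
    | _ a b =>
      rw [Sym2.map_pair_eq, Sym2.eq_iff] at heq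
      rw [mem_edgeFinset, SimpleGraph.mem_edgeSet] at he
      rcases heq with ⟨hh1, hh2⟩ | ⟨hh1, hh2⟩
      · rw [← hinj hh1, ← hinj hh2]; exact he
      · rw [← hinj hh1, ← hinj hh2]; exact he.symm
  refine ⟨⟨Equiv.ofBijective φ hbij, ?_⟩, ?_⟩
  · intro a b
    exact ⟨fun h' => hadjback h', fun h' => hadjfwd h'⟩
  · intro a ha
    exact hφ1 a ha

end XTree
end Lemmas

open XTree in
/-- If `L` is a stable triplet cover of a fully-resolved `X`-tree `T`
with `n := |X| ≥ 3`, then `L` is a strong lasso for `T`, i.e. simultaneously an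
edge-weight lasso and a topological lasso for `T`. -/
theorem stableTripletCover_isStrongLasso {α : Type} (X : Set α) (hfin : X.Finite)
    (hcard : 3 ≤ X.ncard) (T : XTree α X) (hT : T.IsFullyResolved)
    (L : Set (Sym2 α)) (hL : IsStableTripletCover T L) :
    IsStrongLasso T L := by
  obtain ⟨f, hfT, hLdef⟩ := hL
  exact ⟨T.edge_lasso hfin hcard hT hfT hLdef, T.topo_lasso hfin hcard hT hfT hLdef⟩
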